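/- Let A₊₁, A₋₁, A₊₂, A₋₂ be nonzero 2×2 complex matrices satisfying the simple-square-lattice unitarity conditions: (i) A₊ᵢ·A₋ᵢᴴ = 0 and A₋ᵢᴴ·A₊ᵢ = 0 for i = 1, 2; (ii) for {i, j} = {1, 2}: A₊ᵢ·A₋ⱼᴴ + A₊ⱼ·A₋ᵢᴴ = 0, A₊ᵢ·A₊ⱼᴴ + A₋ⱼ·A₋ᵢᴴ = 0, A₋ᵢᴴ·A₊ⱼ + A₋ⱼᴴ·A₊ᵢ = 0, and A₋ᵢᴴ·A₋ⱼ + A₊ⱼᴴ·A₊ᵢ = 0. Suppose moreover that a 2×2 complex matrix A_e satisfies, for both h ∈ {+1, +2} (with −h denoting the corresponding A₋ᵢ): A_h·A_eᴴ + A_e·A_{−h}ᴴ = 0 and A_eᴴ·A_h + A_{−h}ᴴ·A_e = 0. Then A_e = 0. In other words, no quantum walk with a two-dimensional coin on the simple square lattice can have a nonzero transition matrix associated to the identity element (a loop, i.e., a mass term). -/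

import Mathlib

open Matrix

namespace SqLat

abbrev V : Type := Fin 2 → ℂ

def inn (x y : V) : ℂ := star (x 0) * y 0 + star (x 1) * y 1

def outer (p q : V) : Matrix (Fin 2) (Fin 2) ℂ := Matrix.of fun i j => p i * star (q j)

def perp (x : V) : V := ![-(star (x 1)), star (x 0)]

@[simp] lemma outer_apply (p q : V) (i j : Fin 2) : outer p q i j = p i * star (q j) := rfl

@[simp] lemma perp0 (x : V) : perp x 0 = -(star (x 1)) := rfl
@[simp] lemma perp1 (x : V) : perp x 1 = star (x 0) := rfl

lemma vext {x y : V} (h0 : x 0 = y 0) (h1 : x 1 = y 1) : x = y := by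
  funext i; fin_cases i <;> assumption

lemma exists_nz {p : V} (hp : p ≠ 0) : ∃ i, p i ≠ 0 := by
  by_contra h; push_neg at h
  exact hp (vext (h 0) (h 1))

lemma outer_ne_zero {p q : V} (hp : p ≠ 0) (hq : q ≠ 0) : outer p q ≠ 0 := by
  obtain ⟨i, hi⟩ := exists_nz hp
  obtain ⟨j, hj⟩ := exists_nz hq
  intro h
  have := congrFun (congrFun h i) j
  simp only [outer_apply, Matrix.zero_apply] at this
  exact (mul_ne_zero hi (star_ne_zero.mpr hj)) this

lemma outer_eq_zero_left {p q : V} (h : outer p q = 0) (hq : q ≠ 0) : p = 0 := by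
  obtain ⟨j, hj⟩ := exists_nz hq
  have hz : ∀ i, p i = 0 := by
    intro i
    have h' := congrFun (congrFun h i) j
    simp only [outer_apply, Matrix.zero_apply] at h'
    exact (mul_eq_zero.mp h').resolve_right (star_ne_zero.mpr hj)
  exact vext (hz 0) (hz 1)

@[simp] lemma outer_zero_right (p : V) : outer p (0 : V) = 0 := by
  ext i j; simp [outer]

lemma outer_conjT (p q : V) : (outer p q)ᴴ = outer q p := by
  ext i j; simp [outer, Matrix.conjTranspose_apply]; ring

lemma outer_mul_outer (p q r s : V) : outer p q * outer r s = inn q r • outer p s := by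
  ext i j
  simp [outer, inn, Matrix.mul_apply, Fin.sum_univ_two, Matrix.smul_apply, smul_eq_mul]
  ring

lemma mul_outer (M : Matrix (Fin 2) (Fin 2) ℂ) (p q : V) :
    M * outer p q = outer (M *ᵥ p) q := by
  ext i j
  simp [outer, Matrix.mul_apply, Matrix.mulVec, dotProduct, Fin.sum_univ_two]
  ring

lemma outer_mulH (p q : V) (N : Matrix (Fin 2) (Fin 2) ℂ) :
    outer p q * Nᴴ = outer p (N *ᵥ q) := by
  ext i j
  simp [outer, Matrix.mul_apply, Matrix.mulVec, dotProduct, Fin.sum_univ_two,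
    Matrix.conjTranspose_apply]
  ring

lemma outer_smul_left (t : ℂ) (p q : V) : outer (t • p) q = t • outer p q := by
  ext i j; simp [outer, Matrix.smul_apply, smul_eq_mul]; ring

lemma outer_mulVec (p q v : V) : outer p q *ᵥ v = inn q v • p := by
  funext i
  simp [outer, inn, Matrix.mulVec, dotProduct, Fin.sum_univ_two, smul_eq_mul]
  ring

lemma smul_outer_eq_zero {t : ℂ} {p q : V} (h : t • outer p q = 0)
    (hp : p ≠ 0) (hq : q ≠ 0) : t = 0 := by
  obtain ⟨i, hi⟩ := exists_nz hp
  obtain ⟨j, hj⟩ := exists_nz hq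
  have h' := congrFun (congrFun h i) j
  simp only [Matrix.smul_apply, outer_apply, Matrix.zero_apply, smul_eq_mul] at h'
  rcases mul_eq_zero.mp h' with h'' | h''
  · exact h''
  · exact absurd h'' (mul_ne_zero hi (star_ne_zero.mpr hj))

lemma key {p q r s : V} (h : outer p q + outer r s = 0) (hp : p ≠ 0) (hq : q ≠ 0) :
    ∃ t t' : ℂ, t ≠ 0 ∧ t' ≠ 0 ∧ r = t • p ∧ s = t' • q := by
  have hrs : ∀ i j, r i * star (s j) = -(p i * star (q j)) := by
    intro i j
    have h' := congrFun (congrFun h i) j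
    simp only [Matrix.add_apply, outer_apply, Matrix.zero_apply] at h'
    linear_combination h'
  have hr : r ≠ 0 := by
    rintro rfl
    apply outer_ne_zero hp hq
    ext i j
    have h0 := hrs i j
    simp only [Pi.zero_apply, zero_mul] at h0
    simpa [outer_apply] using (neg_eq_zero.mp h0.symm)
  have hs : s ≠ 0 := by
    rintro rfl
    apply outer_ne_zero hp hq
    ext i j
    have h0 := hrs i j
    simp only [Pi.zero_apply, star_zero, mul_zero] at h0
    simpa [outer_apply] using (neg_eq_zero.mp h0.symm)
  obtain ⟨i0, hi0⟩ := exists_nz hr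
  obtain ⟨j0, hj0⟩ := exists_nz hs
  have hqj0 : q j0 ≠ 0 := by
    intro h0
    have := hrs i0 j0
    rw [h0] at this
    simp only [star_zero, mul_zero, neg_zero] at this
    exact (mul_ne_zero hi0 (star_ne_zero.mpr hj0)) this
  have hpi0 : p i0 ≠ 0 := by
    intro h0
    have := hrs i0 j0
    rw [h0] at this
    simp only [zero_mul, neg_zero] at this
    exact (mul_ne_zero hi0 (star_ne_zero.mpr hj0)) this
  refine ⟨-(star (q j0) / star (s j0)), -(star (p i0) / star (r i0)), ?_, ?_, ?_, ?_⟩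
  · exact neg_ne_zero.mpr (div_ne_zero (star_ne_zero.mpr hqj0) (star_ne_zero.mpr hj0))
  · exact neg_ne_zero.mpr (div_ne_zero (star_ne_zero.mpr hpi0) (star_ne_zero.mpr hi0))
  · funext i
    have h1 := hrs i j0
    have hsj : star (s j0) ≠ 0 := star_ne_zero.mpr hj0
    simp only [Pi.smul_apply, smul_eq_mul]
    rw [neg_mul, div_mul_eq_mul_div, ← neg_div, eq_div_iff hsj]
    linear_combination h1
  · funext j
    have h1 := hrs i0 j
    have hri : star (r i0) ≠ 0 := star_ne_zero.mpr hi0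
    have h2 : star (r i0) * s j = -(star (p i0) * q j) := by
      have := congrArg star h1
      simpa [star_mul', star_neg, star_star, mul_comm] using this
    simp only [Pi.smul_apply, smul_eq_mul]
    rw [neg_mul, div_mul_eq_mul_div, ← neg_div, eq_div_iff hri]
    linear_combination h2

lemma inn_comm (x y : V) : inn x y = star (inn y x) := by
  simp [inn]; ring

lemma inn_smul_left (t : ℂ) (x y : V) : inn (t • x) y = star t * inn x y := by
  simp [inn]; ring

lemma inn_smul_right (t : ℂ) (x y : V) : inn x (t • y) = t * inn x y := by
  simp [inn]; ring

lemma inn_add_right (x y z : V) : inn x (y + z) = inn x y + inn x z := by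
  simp [inn]; ring

@[simp] lemma inn_perp_right (x : V) : inn x (perp x) = 0 := by
  simp [inn, perp]; ring

@[simp] lemma inn_perp_left (x : V) : inn (perp x) x = 0 := by
  simp [inn, perp]; ring

lemma inn_self_ne_zero {x : V} (hx : x ≠ 0) : inn x x ≠ 0 := by
  intro h
  apply hx
  have h' : ((Complex.normSq (x 0) + Complex.normSq (x 1) : ℝ) : ℂ) = 0 := by
    rw [← h]
    simp [inn, Complex.normSq_eq_conj_mul_self, Complex.star_def]
  rw [Complex.ofReal_eq_zero] at h'
  have h0 : Complex.normSq (x 0) = 0 ∧ Complex.normSq (x 1) = 0 := by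
    constructor <;> nlinarith [Complex.normSq_nonneg (x 0), Complex.normSq_nonneg (x 1)]
  exact vext (Complex.normSq_eq_zero.mp h0.1) (Complex.normSq_eq_zero.mp h0.2)

lemma perp_smul (t : ℂ) (x : V) : perp (t • x) = star t • perp x := by
  apply vext <;> simp [perp]

lemma perp_perp (x : V) : perp (perp x) = -x := by
  apply vext <;> simp [perp]

lemma perp_ne_zero {x : V} (hx : x ≠ 0) : perp x ≠ 0 := by
  intro h
  apply hx
  apply vext
  · have := congrFun h 1
    simpa using this
  · have := congrFun h 0
    simp only [perp0, Pi.zero_apply, neg_eq_zero] at this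
    simpa using this

lemma orth_decomp {x y : V} (hx : x ≠ 0) (h : inn x y = 0) : ∃ μ : ℂ, y = μ • perp x := by
  simp only [inn] at h
  by_cases hx0 : x 0 ≠ 0
  · refine ⟨y 1 / star (x 0), ?_⟩
    have hs : star (x 0) ≠ 0 := star_ne_zero.mpr hx0
    apply vext <;> simp only [Pi.smul_apply, perp0, perp1, smul_eq_mul]
    · rw [div_mul_eq_mul_div, eq_div_iff hs]
      linear_combination h
    · exact (div_mul_cancel₀ _ hs).symm
  · push_neg at hx0
    have hx1 : x 1 ≠ 0 := by
      intro h1; exact hx (vext hx0 h1)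
    have hy1 : y 1 = 0 := by
      rw [hx0] at h
      simp only [star_zero, zero_mul, zero_add] at h
      exact (mul_eq_zero.mp h).resolve_left (star_ne_zero.mpr hx1)
    refine ⟨-(y 0) / star (x 1), ?_⟩
    have hs : star (x 1) ≠ 0 := star_ne_zero.mpr hx1
    apply vext <;> simp only [Pi.smul_apply, perp0, perp1, smul_eq_mul]
    · rw [div_mul_eq_mul_div, neg_mul_neg, mul_div_assoc, div_self hs, mul_one]
    · rw [hx0, hy1]
      simp

lemma basis_decomp {b : V} (hb : b ≠ 0) (f : V) : ∃ x y : ℂ, f = x • b + y • perp b := by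
  have hn : inn b b ≠ 0 := inn_self_ne_zero hb
  refine ⟨inn b f / inn b b, inn (perp b) f / inn b b, ?_⟩
  apply vext <;> simp only [Pi.add_apply, Pi.smul_apply, smul_eq_mul] <;>
  · rw [div_mul_eq_mul_div, div_mul_eq_mul_div, ← add_div, eq_comm, div_eq_iff hn]
    simp only [inn, perp0, perp1, star_neg, star_star]
    ring

lemma indep {a : V} {x y : ℂ} (ha : a ≠ 0) (h : x • a + y • perp a = 0) :
    x = 0 ∧ y = 0 := by
  have h0 := congrFun h 0
  have h1 := congrFun h 1
  simp only [Pi.add_apply, Pi.smul_apply, perp0, perp1, smul_eq_mul, Pi.zero_apply] at h0 h1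
  have hx : x * inn a a = 0 := by
    simp only [inn]
    linear_combination star (a 0) * h0 + star (a 1) * h1
  have hx0 : x = 0 := (mul_eq_zero.mp hx).resolve_right (inn_self_ne_zero ha)
  refine ⟨hx0, ?_⟩
  rw [hx0, zero_mul, zero_add] at h0 h1
  rcases exists_nz ha with ⟨i, hi⟩
  fin_cases i
  · have : y * star (a 0) = 0 := h1
    exact (mul_eq_zero.mp this).resolve_right (star_ne_zero.mpr hi)
  · have : y * -(star (a 1)) = 0 := h0
    rcases mul_eq_zero.mp this with h' | h'
    · exact h'
    · exact absurd (neg_eq_zero.mp h') (star_ne_zero.mpr hi)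

lemma det0_of_mul_left {M N : Matrix (Fin 2) (Fin 2) ℂ} (h : M * N = 0) (hN : N ≠ 0) :
    M.det = 0 := by
  by_contra hd
  apply hN
  have hu : IsUnit M.det := isUnit_iff_ne_zero.mpr hd
  calc N = M⁻¹ * (M * N) := by rw [← Matrix.mul_assoc, Matrix.nonsing_inv_mul M hu, Matrix.one_mul]
  _ = 0 := by rw [h, Matrix.mul_zero]

lemma rank1 {M : Matrix (Fin 2) (Fin 2) ℂ} (hM : M ≠ 0) (hd : M.det = 0) :
    ∃ p q : V, p ≠ 0 ∧ q ≠ 0 ∧ M = outer p q := by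
  rw [Matrix.det_fin_two] at hd
  have hout : ∀ (p q : V), M 0 0 = p 0 * star (q 0) → M 0 1 = p 0 * star (q 1) →
      M 1 0 = p 1 * star (q 0) → M 1 1 = p 1 * star (q 1) → M = outer p q := by
    intro p q e00 e01 e10 e11
    ext i j
    fin_cases i <;> fin_cases j <;> simp only [outer_apply]
    · exact e00
    · exact e01
    · exact e10
    · exact e11
  by_cases h00 : M 0 0 ≠ 0
  · refine ⟨![M 0 0, M 1 0], ![1, star (M 0 1 / M 0 0)], ?_, ?_, hout _ _ ?_ ?_ ?_ ?_⟩
    · intro h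
      have h0 := congrFun h 0
      simp at h0
      exact h00 h0
    · intro h
      have h0 := congrFun h 0
      simp at h0
    · show M 0 0 = M 0 0 * star 1
      simp
    · show M 0 1 = M 0 0 * star (star (M 0 1 / M 0 0))
      rw [star_star, mul_div_cancel₀ _ h00]
    · show M 1 0 = M 1 0 * star 1
      simp
    · show M 1 1 = M 1 0 * star (star (M 0 1 / M 0 0))
      rw [star_star, ← mul_div_assoc, eq_comm, div_eq_iff h00]
      linear_combination -hd
  · push_neg at h00
    by_cases h10 : M 1 0 ≠ 0
    · have h01 : M 0 1 = 0 := by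
        rw [h00] at hd
        simp only [zero_mul, zero_sub, neg_eq_zero] at hd
        exact (mul_eq_zero.mp hd).resolve_right h10
      refine ⟨![M 0 0, M 1 0], ![1, star (M 1 1 / M 1 0)], ?_, ?_, hout _ _ ?_ ?_ ?_ ?_⟩
      · intro h
        have h0 := congrFun h 1
        simp at h0
        exact h10 h0
      · intro h
        have h0 := congrFun h 0
        simp at h0
      · show M 0 0 = M 0 0 * star 1
        simp
      · show M 0 1 = M 0 0 * star (star (M 1 1 / M 1 0))
        rw [h01, h00, zero_mul]
      · show M 1 0 = M 1 0 * star 1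
        simp
      · show M 1 1 = M 1 0 * star (star (M 1 1 / M 1 0))
        rw [star_star, mul_div_cancel₀ _ h10]
    · push_neg at h10
      have hc : ¬(M 0 1 = 0 ∧ M 1 1 = 0) := by
        rintro ⟨ha, hb⟩
        apply hM
        ext i j
        fin_cases i <;> fin_cases j <;> simp only [Matrix.zero_apply]
        · exact h00
        · exact ha
        · exact h10
        · exact hb
      refine ⟨![M 0 1, M 1 1], ![0, 1], ?_, ?_, hout _ _ ?_ ?_ ?_ ?_⟩
      · intro h
        exact hc ⟨by simpa using congrFun h 0, by simpa using congrFun h 1⟩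
      · intro h
        have h0 := congrFun h 1
        simp at h0
      · show M 0 0 = M 0 1 * star 0
        rw [h00]; simp
      · show M 0 1 = M 0 1 * star 1
        simp
      · show M 1 0 = M 1 1 * star 0
        rw [h10]; simp
      · show M 1 1 = M 1 1 * star 1
        simp

lemma eq_zero_of_vanish {b : V} {M : Matrix (Fin 2) (Fin 2) ℂ} (hb : b ≠ 0)
    (h1 : M *ᵥ b = 0) (h2 : M *ᵥ perp b = 0) : M = 0 := by
  have hn : inn b b ≠ 0 := inn_self_ne_zero hb
  ext i j
  have e1 := congrFun h1 i
  have e2 := congrFun h2 i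
  simp only [Matrix.mulVec, dotProduct, Fin.sum_univ_two, perp0, perp1, Pi.zero_apply] at e1 e2
  have g0 : M i 0 * inn b b = 0 := by
    simp only [inn]
    linear_combination star (b 0) * e1 - b 1 * e2
  have g1 : M i 1 * inn b b = 0 := by
    simp only [inn]
    linear_combination star (b 1) * e1 + b 0 * e2
  fin_cases j
  · simpa using (mul_eq_zero.mp g0).resolve_right hn
  · simpa using (mul_eq_zero.mp g1).resolve_right hn

end SqLat

open SqLat in
/-- No mass term on the simple square lattice: if the nonzero transition matrices
`A₊₁, A₋₁, A₊₂, A₋₂` of a quantum walk with a two-dimensional coin satisfy the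
simple-square-lattice unitarity conditions (i) and (ii), and a matrix `A_e`
(associated to the identity/loop edge) satisfies the loop unitarity conditions
`A_h·A_eᴴ + A_e·A_{−h}ᴴ = 0` and `A_eᴴ·A_h + A_{−h}ᴴ·A_e = 0` for `h ∈ {+1, +2}`,
then `A_e = 0`. -/
theorem square_lattice_no_mass_term
    (Ap1 Am1 Ap2 Am2 : Matrix (Fin 2) (Fin 2) ℂ)
    (hp1 : Ap1 ≠ 0) (hm1 : Am1 ≠ 0) (hp2 : Ap2 ≠ 0) (hm2 : Am2 ≠ 0)
    -- (i)
    (h1a : Ap1 * Am1ᴴ = 0) (h1b : Am1ᴴ * Ap1 = 0)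
    (h2a : Ap2 * Am2ᴴ = 0) (h2b : Am2ᴴ * Ap2 = 0)
    -- (ii) for (i,j) = (1,2) and (2,1)
    (h12a : Ap1 * Am2ᴴ + Ap2 * Am1ᴴ = 0)
    (h21a : Ap2 * Am1ᴴ + Ap1 * Am2ᴴ = 0)
    (h12b : Ap1 * Ap2ᴴ + Am2 * Am1ᴴ = 0)
    (h21b : Ap2 * Ap1ᴴ + Am1 * Am2ᴴ = 0)
    (h12c : Am1ᴴ * Ap2 + Am2ᴴ * Ap1 = 0)
    (h21c : Am2ᴴ * Ap1 + Am1ᴴ * Ap2 = 0)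
    (h12d : Am1ᴴ * Am2 + Ap2ᴴ * Ap1 = 0)
    (h21d : Am2ᴴ * Am1 + Ap1ᴴ * Ap2 = 0)
    -- loop conditions
    (Ae : Matrix (Fin 2) (Fin 2) ℂ)
    (he1a : Ap1 * Aeᴴ + Ae * Am1ᴴ = 0)
    (he1b : Aeᴴ * Ap1 + Am1ᴴ * Ae = 0)
    (he2a : Ap2 * Aeᴴ + Ae * Am2ᴴ = 0)
    (he2b : Aeᴴ * Ap2 + Am2ᴴ * Ae = 0) :
    Ae = 0 := by
  have hm1' : Am1ᴴ ≠ 0 := fun h => hm1 (Matrix.conjTranspose_eq_zero.mp h)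
  have hm2' : Am2ᴴ ≠ 0 := fun h => hm2 (Matrix.conjTranspose_eq_zero.mp h)
  obtain ⟨a, b, ha, hb, hA⟩ := rank1 hp1 (det0_of_mul_left h1a hm1')
  obtain ⟨c, d, hc, hd, hC⟩ := rank1 hm1 (by
    have h := det0_of_mul_left h1b hp1
    rwa [Matrix.det_conjTranspose, star_eq_zero] at h)
  obtain ⟨e, f, he, hf, hE⟩ := rank1 hp2 (det0_of_mul_left h2a hm2')
  obtain ⟨g, k, hg, hk, hG⟩ := rank1 hm2 (by
    have h := det0_of_mul_left h2b hp2
    rwa [Matrix.det_conjTranspose, star_eq_zero] at h)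
  subst hA; subst hC; subst hE; subst hG
  -- orthogonality scalars
  rw [outer_conjT, outer_mul_outer] at h1a h2a
  rw [outer_conjT, outer_mul_outer] at h1b h2b
  have hbd : inn b d = 0 := smul_outer_eq_zero h1a ha hc
  have hca : inn c a = 0 := smul_outer_eq_zero h1b hd hb
  have hfk : inn f k = 0 := smul_outer_eq_zero h2a he hg
  have hge : inn g e = 0 := smul_outer_eq_zero h2b hk hf
  -- perpendicular decompositions
  obtain ⟨δ, hdel⟩ := orth_decomp hb hbd
  have hδ : δ ≠ 0 := by rintro rfl; rw [zero_smul] at hdel; exact hd hdel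
  have hac : inn a c = 0 := by rw [inn_comm, hca, star_zero]
  obtain ⟨γ, hγ⟩ := orth_decomp ha hac
  have hγ0 : γ ≠ 0 := by rintro rfl; rw [zero_smul] at hγ; exact hc hγ
  obtain ⟨κ, hκ⟩ := orth_decomp hf hfk
  have hκ0 : κ ≠ 0 := by rintro rfl; rw [zero_smul] at hκ; exact hk hκ
  have heg : inn e g = 0 := by rw [inn_comm, hge, star_zero]
  obtain ⟨ε, hε⟩ := orth_decomp he heg
  have hε0 : ε ≠ 0 := by rintro rfl; rw [zero_smul] at hε; exact hg hε
  -- rewrite the loop conditions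
  rw [outer_mulH, outer_conjT, mul_outer] at he1a
  rw [outer_mulH, outer_conjT, mul_outer] at he2a
  -- rewrite the cross conditions we need
  rw [outer_conjT, outer_conjT, outer_mul_outer, outer_mul_outer] at h12a
  rw [outer_conjT, outer_conjT, outer_mul_outer, outer_mul_outer] at h12b
  rw [outer_conjT, outer_conjT, outer_mul_outer, outer_mul_outer] at h12d
  -- main claim
  have hub : Ae *ᵥ b = 0 := by
    by_contra hu
    obtain ⟨t, t2, ht, ht2, htd, htc⟩ := key he1a ha hu
    have hAeb : Ae *ᵥ b = (t2⁻¹ * γ) • perp a := by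
      rw [hγ] at htc
      calc Ae *ᵥ b = t2⁻¹ • (t2 • (Ae *ᵥ b)) := by
            rw [smul_smul, inv_mul_cancel₀ ht2, one_smul]
      _ = t2⁻¹ • (γ • perp a) := by rw [← htc]
      _ = (t2⁻¹ * γ) • perp a := smul_smul _ _ _
    have hAepb : Ae *ᵥ perp b = (δ⁻¹ * t) • a := by
      have h' : Ae *ᵥ d = δ • (Ae *ᵥ perp b) := by rw [hdel, Matrix.mulVec_smul]
      rw [htd] at h'
      calc Ae *ᵥ perp b = δ⁻¹ • (δ • (Ae *ᵥ perp b)) := by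
            rw [smul_smul, inv_mul_cancel₀ hδ, one_smul]
      _ = δ⁻¹ • (t • a) := by rw [← h']
      _ = (δ⁻¹ * t) • a := smul_smul _ _ _
    by_cases hS : inn b f = 0
    · by_cases hT : inn e a = 0
      · -- Case 3 : f ⟂ b and e ⟂ a; contradiction already from h12a
        obtain ⟨β, hβ⟩ := orth_decomp hb hS
        have hβ0 : β ≠ 0 := by rintro rfl; rw [zero_smul] at hβ; exact hf hβ
        have hae' : inn a e = 0 := by rw [inn_comm, hT, star_zero]
        obtain ⟨τ, hτ⟩ := orth_decomp ha hae'
        have hτ0 : τ ≠ 0 := by rintro rfl; rw [zero_smul] at hτ; exact he hτ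
        have hv := congrArg (fun X : Matrix (Fin 2) (Fin 2) ℂ => X *ᵥ a) h12a
        simp only [Matrix.add_mulVec, Matrix.smul_mulVec, outer_mulVec,
          Matrix.zero_mulVec, hca, zero_smul, smul_zero, add_zero] at hv
        rw [smul_smul] at hv
        have hz' : inn b k * inn g a = 0 := (smul_eq_zero.mp hv).resolve_right ha
        have hk' : k = (-(κ * star β)) • b := by
          rw [hκ, hβ, perp_smul, perp_perp, smul_smul, smul_neg, ← neg_smul]
        have hbk0 : inn b k ≠ 0 := by
          rw [hk', inn_smul_right]
          exact mul_ne_zero (neg_ne_zero.mpr (mul_ne_zero hκ0 (star_ne_zero.mpr hβ0)))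
            (inn_self_ne_zero hb)
        have hg' : g = (-(ε * star τ)) • a := by
          rw [hε, hτ, perp_smul, perp_perp, smul_smul, smul_neg, ← neg_smul]
        have hga0 : inn g a ≠ 0 := by
          rw [hg', inn_smul_left]
          exact mul_ne_zero (star_ne_zero.mpr (neg_ne_zero.mpr
            (mul_ne_zero hε0 (star_ne_zero.mpr hτ0)))) (inn_self_ne_zero ha)
        rcases mul_eq_zero.mp hz' with h' | h'
        · exact hbk0 h'
        · exact hga0 h'
      · -- Case 2 : inn e a ≠ 0 forces f parallel to d, then e ⟂ a, contradiction
        rw [← outer_smul_left, ← outer_smul_left, add_comm] at h12d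
        obtain ⟨t7, t8, ht7, ht8, hdk, -⟩ := key h12d (smul_ne_zero hT hf) hb
        rw [smul_smul] at hdk
        have h7T : t7 * inn e a ≠ 0 := mul_ne_zero ht7 hT
        have hfd' : f = ((t7 * inn e a)⁻¹ * inn c g) • d := by
          calc f = (t7 * inn e a)⁻¹ • ((t7 * inn e a) • f) := by
                rw [smul_smul, inv_mul_cancel₀ h7T, one_smul]
          _ = (t7 * inn e a)⁻¹ • (inn c g • d) := by rw [← hdk]
          _ = ((t7 * inn e a)⁻¹ * inn c g) • d := smul_smul _ _ _
        set σ := (t7 * inn e a)⁻¹ * inn c g with hσdef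
        have hσ0 : σ ≠ 0 := by
          intro h; rw [h, zero_smul] at hfd'; exact hf hfd'
        have hfpb : f = (σ * δ) • perp b := by rw [hfd', hdel, smul_smul]
        have hw : Ae *ᵥ f = (σ * δ * (δ⁻¹ * t)) • a := by
          rw [hfpb, Matrix.mulVec_smul, hAepb, smul_smul]
        have hw0 : Ae *ᵥ f ≠ 0 := by
          rw [hw]
          exact smul_ne_zero (mul_ne_zero (mul_ne_zero hσ0 hδ)
            (mul_ne_zero (inv_ne_zero hδ) ht)) ha
        obtain ⟨t9, t10, ht9, ht10, hAek, -⟩ := key he2a he hw0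
        have hk2 : k = (-(κ * star (σ * δ))) • b := by
          rw [hκ, hfpb, perp_smul, perp_perp, smul_smul, smul_neg, ← neg_smul]
        have hAek2 : Ae *ᵥ k = ((-(κ * star (σ * δ))) * (t2⁻¹ * γ)) • perp a := by
          rw [hk2, Matrix.mulVec_smul, hAeb, smul_smul]
        rw [hAek2] at hAek
        have he2 : e = (t9⁻¹ * ((-(κ * star (σ * δ))) * (t2⁻¹ * γ))) • perp a := by
          calc e = t9⁻¹ • (t9 • e) := by rw [smul_smul, inv_mul_cancel₀ ht9, one_smul]
          _ = t9⁻¹ • (((-(κ * star (σ * δ))) * (t2⁻¹ * γ)) • perp a) := by rw [← hAek]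
          _ = _ • perp a := smul_smul _ _ _
        exact hT (by rw [he2, inn_smul_left, inn_perp_left, mul_zero])
    · -- Case 1 : inn b f ≠ 0 forces e parallel to c, then x = 0, contradiction
      rw [← outer_smul_left, ← outer_smul_left] at h12b
      obtain ⟨t3, t4, ht3, ht4, -, hce⟩ := key h12b (smul_ne_zero hS ha) he
      have he3 : e = (t4⁻¹ * γ) • perp a := by
        rw [hγ] at hce
        calc e = t4⁻¹ • (t4 • e) := by rw [smul_smul, inv_mul_cancel₀ ht4, one_smul]
        _ = t4⁻¹ • (γ • perp a) := by rw [← hce]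
        _ = (t4⁻¹ * γ) • perp a := smul_smul _ _ _
      obtain ⟨x, y, hfxy⟩ := basis_decomp hb f
      have hwf : Ae *ᵥ f = (x * (t2⁻¹ * γ)) • perp a + (y * (δ⁻¹ * t)) • a := by
        rw [hfxy, Matrix.mulVec_add, Matrix.mulVec_smul, Matrix.mulVec_smul, hAeb, hAepb,
          smul_smul, smul_smul]
      have hw0 : Ae *ᵥ f ≠ 0 := by
        intro h0
        rw [hwf, add_comm] at h0
        obtain ⟨hy', hx'⟩ := indep ha h0
        have hx0 : x = 0 := by
          rcases mul_eq_zero.mp hx' with h | h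
          · exact h
          · exact absurd h (mul_ne_zero (inv_ne_zero ht2) hγ0)
        have hy0 : y = 0 := by
          rcases mul_eq_zero.mp hy' with h | h
          · exact h
          · exact absurd h (mul_ne_zero (inv_ne_zero hδ) ht)
        rw [hx0, hy0, zero_smul, zero_smul, add_zero] at hfxy
        exact hf hfxy
      obtain ⟨t5, t6, ht5, ht6, -, hgw⟩ := key he2a he hw0
      have hwg : Ae *ᵥ f = (t6⁻¹ * ε) • perp e := by
        rw [hε] at hgw
        calc Ae *ᵥ f = t6⁻¹ • (t6 • (Ae *ᵥ f)) := by
              rw [smul_smul, inv_mul_cancel₀ ht6, one_smul]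
        _ = t6⁻¹ • (ε • perp e) := by rw [← hgw]
        _ = (t6⁻¹ * ε) • perp e := smul_smul _ _ _
      have hpe : perp e = (-(star (t4⁻¹ * γ))) • a := by
        rw [he3, perp_smul, perp_perp, smul_neg, ← neg_smul]
      rw [hpe, smul_smul] at hwg
      have hcomb := hwf.symm.trans hwg
      have h0 : (y * (δ⁻¹ * t) - (t6⁻¹ * ε) * (-(star (t4⁻¹ * γ)))) • a
          + (x * (t2⁻¹ * γ)) • perp a = 0 := by
        rw [sub_smul, ← hcomb]
        abel
      obtain ⟨-, hx'⟩ := indep ha h0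
      have hx0 : x = 0 := by
        rcases mul_eq_zero.mp hx' with h | h
        · exact h
        · exact absurd h (mul_ne_zero (inv_ne_zero ht2) hγ0)
      exact hS (by rw [hfxy, hx0, zero_smul, zero_add, inn_smul_right, inn_perp_right, mul_zero])
  rw [hub, outer_zero_right, zero_add] at he1a
  have hud : Ae *ᵥ d = 0 := outer_eq_zero_left he1a hc
  have hupb : Ae *ᵥ perp b = 0 := by
    rw [hdel, Matrix.mulVec_smul] at hud
    exact (smul_eq_zero.mp hud).resolve_left hδ
  exact eq_zero_of_vanish hb hub hupb
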